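/- For every depth d ∈ ℕ and all vectors n⁻, n⁺ ∈ ℕ^p, the BART sub-correlation function satisfies k_d(n⁻, 0, n⁺) = 1. -/

import Mathlib

/-- Total weight `W(v) = Σ_{i : v_i ≠ 0} w_i` of the axes with at least one available split. -/
noncomputable def bartW (p : ℕ) (w : Fin p → ℝ) (v : Fin p → ℕ) : ℝ :=
  ∑ i ∈ Finset.univ.filter (fun i => v i ≠ 0), w i

/-- The BART sub-correlation function `k_d(n⁻, n⁰, n⁺)`, defined by well-founded recursion
on `Σ_i (n⁻_i + n⁺_i)`. -/
noncomputable def bartK (p : ℕ) (w : Fin p → ℝ) (P : ℕ → ℝ)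
    (d : ℕ) (nm n0 np : Fin p → ℕ) : ℝ :=
  if ∀ i, nm i + n0 i + np i = 0 then 1
  else
    1 - P d * (1 - (1 / bartW p w (fun i => nm i + n0 i + np i)) *
      ∑ i ∈ Finset.univ.filter (fun i => nm i + n0 i + np i ≠ 0),
        (w i / ((nm i + n0 i + np i : ℕ) : ℝ)) *
          ((∑ k ∈ (Finset.range (nm i)).attach,
              bartK p w P (d+1) (Function.update nm i k.1) n0 np) +
           (∑ k ∈ (Finset.range (np i)).attach,
              bartK p w P (d+1) nm n0 (Function.update np i k.1))))
termination_by ∑ i, (nm i + np i)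
decreasing_by
  · have hk : k.1 < nm i := Finset.mem_range.mp k.2
    refine Finset.sum_lt_sum (fun j _ => ?_) ⟨i, Finset.mem_univ i, ?_⟩
    · rcases eq_or_ne j i with rfl | hj
      · simp only [Function.update_self]; omega
      · simp only [Function.update_of_ne hj]; omega
    · simp only [Function.update_self]; omega
  · have hk : k.1 < np i := Finset.mem_range.mp k.2
    refine Finset.sum_lt_sum (fun j _ => ?_) ⟨i, Finset.mem_univ i, ?_⟩
    · rcases eq_or_ne j i with rfl | hj
      · simp only [Function.update_self]; omega
      · simp only [Function.update_of_ne hj]; omega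
    · simp only [Function.update_self]; omega

/-- Property 1 of Theorem 2: `k_d(n⁻, 0, n⁺) = 1` for every depth `d` and all `n⁻, n⁺`. -/
theorem bartK_eq_one_of_nZero_eq_zero
    (p : ℕ) (hp : 1 ≤ p) (w : Fin p → ℝ) (hw : ∀ i, 0 < w i)
    (P : ℕ → ℝ) (hP : ∀ d, P d ∈ Set.Icc (0 : ℝ) 1)
    (d : ℕ) (nm np : Fin p → ℕ) :
    bartK p w P d nm 0 np = 1 := by
  have main : ∀ N d (nm np : Fin p → ℕ), (∑ i, (nm i + np i)) = N →
      bartK p w P d nm 0 np = 1 := by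
    intro N
    induction N using Nat.strong_induction_on with
    | _ N ih =>
      intro d nm np hN
      rw [bartK]
      split
      · rfl
      next h =>
        have hsum : ∀ i ∈ Finset.univ.filter (fun i => nm i + (0 : Fin p → ℕ) i + np i ≠ 0),
            (w i / ((nm i + (0 : Fin p → ℕ) i + np i : ℕ) : ℝ)) *
              ((∑ k ∈ (Finset.range (nm i)).attach,
                  bartK p w P (d+1) (Function.update nm i k.1) 0 np) +
               (∑ k ∈ (Finset.range (np i)).attach,
                  bartK p w P (d+1) nm 0 (Function.update np i k.1))) = w i := by
          intro i hi
          simp only [Finset.mem_filter, Pi.zero_apply] at hi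
          have h1 : ∀ k ∈ (Finset.range (nm i)).attach,
              bartK p w P (d+1) (Function.update nm i k.1) 0 np = 1 := by
            intro k _
            have hk : k.1 < nm i := Finset.mem_range.mp k.2
            refine ih _ ?_ _ _ _ rfl
            rw [← hN]
            refine Finset.sum_lt_sum (fun j _ => ?_) ⟨i, Finset.mem_univ i, ?_⟩
            · rcases eq_or_ne j i with rfl | hj
              · simp only [Function.update_self]; omega
              · simp only [Function.update_of_ne hj]; omega
            · simp only [Function.update_self]; omega
          have h2 : ∀ k ∈ (Finset.range (np i)).attach,
              bartK p w P (d+1) nm 0 (Function.update np i k.1) = 1 := by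
            intro k _
            have hk : k.1 < np i := Finset.mem_range.mp k.2
            refine ih _ ?_ _ _ _ rfl
            rw [← hN]
            refine Finset.sum_lt_sum (fun j _ => ?_) ⟨i, Finset.mem_univ i, ?_⟩
            · rcases eq_or_ne j i with rfl | hj
              · simp only [Function.update_self]; omega
              · simp only [Function.update_of_ne hj]; omega
            · simp only [Function.update_self]; omega
          rw [Finset.sum_congr rfl h1, Finset.sum_congr rfl h2]
          simp only [Finset.sum_const, Finset.card_attach, Finset.card_range,
            nsmul_eq_mul, mul_one, Pi.zero_apply]
          have hne : ((nm i + 0 + np i : ℕ) : ℝ) ≠ 0 := by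
            exact_mod_cast (by omega : (nm i + 0 + np i : ℕ) ≠ 0)
          have hne2 : ((nm i : ℝ) + np i) ≠ 0 := by
            exact_mod_cast (by omega : (nm i + np i : ℕ) ≠ 0)
          push_cast
          field_simp
          rw [add_zero, mul_div_assoc, div_self hne2, mul_one]
        rw [Finset.sum_congr rfl hsum]
        have hWpos : 0 < bartW p w (fun i => nm i + (0 : Fin p → ℕ) i + np i) := by
          push_neg at h
          obtain ⟨i, hi⟩ := h
          refine Finset.sum_pos (fun j _ => hw j) ⟨i, Finset.mem_filter.mpr ⟨Finset.mem_univ i, hi⟩⟩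
        have : (1 / bartW p w (fun i => nm i + (0 : Fin p → ℕ) i + np i)) *
            ∑ i ∈ Finset.univ.filter (fun i => nm i + (0 : Fin p → ℕ) i + np i ≠ 0), w i = 1 := by
          exact one_div_mul_cancel (ne_of_gt hWpos)
        rw [this]
        ring
  exact main _ d nm np rfl
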